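/- Let L = E₈ ⊥ E₈ ⊆ ℝ^{16} be the orthogonal sum of two copies of the E₈ root lattice, with root system R = L(2) of cardinality 480. Then the quadratic form Q[H] = ∑_{x∈R}(xᵀHx)² on 16×16 symmetric matrices has eigenvalue 0 with multiplicity at least 64: Q vanishes on the 64-dimensional space of symmetric matrices whose two diagonal 8×8 blocks are zero. -/

import Mathlib

open Matrix
open scoped BigOperators

/-- The `E₈` lattice in its even coordinate system: all coordinates integers or all
coordinates half-odd-integers, with even coordinate sum. -/
def E8Lattice : Set (Fin 8 → ℝ) :=
  {x | ((∀ i, ∃ k : ℤ, x i = k) ∨ (∀ i, ∃ k : ℤ, x i = k + 1 / 2)) ∧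
        ∃ k : ℤ, ∑ i, x i = 2 * k}

/-- The shell of squared norm `2` of `L = E₈ ⊥ E₈ ⊆ ℝ^{16}`, i.e. its root system. -/
def E8perpE8Roots : Set ((Fin 8 ⊕ Fin 8) → ℝ) :=
  {x | (fun i => x (Sum.inl i)) ∈ E8Lattice ∧ (fun i => x (Sum.inr i)) ∈ E8Lattice ∧
        ∑ i, x i ^ 2 = 2}

/-- The space of symmetric `16 × 16` matrices whose two diagonal `8 × 8` blocks vanish. -/
def offDiagonalBlockSymmetric : Submodule ℝ (Matrix (Fin 8 ⊕ Fin 8) (Fin 8 ⊕ Fin 8) ℝ) where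
  carrier := {H | Hᵀ = H ∧ (∀ i j : Fin 8, H (Sum.inl i) (Sum.inl j) = 0) ∧
    ∀ i j : Fin 8, H (Sum.inr i) (Sum.inr j) = 0}
  add_mem' := by
    rintro a b ⟨ha1, ha2, ha3⟩ ⟨hb1, hb2, hb3⟩
    exact ⟨by rw [Matrix.transpose_add, ha1, hb1],
      fun i j => by simp [Matrix.add_apply, ha2 i j, hb2 i j],
      fun i j => by simp [Matrix.add_apply, ha3 i j, hb3 i j]⟩
  zero_mem' := ⟨Matrix.transpose_zero, fun i j => rfl, fun i j => rfl⟩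
  smul_mem' := by
    rintro c a ⟨h1, h2, h3⟩
    exact ⟨by rw [Matrix.transpose_smul, h1],
      fun i j => by simp [Matrix.smul_apply, h2 i j],
      fun i j => by simp [Matrix.smul_apply, h3 i j]⟩


/-! ### Auxiliary development -/

section Aux

lemma int_one_le_sq {n : ℤ} (h : n ≠ 0) : (1 : ℤ) ≤ n ^ 2 := by
  nlinarith [Int.one_le_abs h, sq_abs n, abs_nonneg n]

lemma E8_min_norm {a : Fin 8 → ℝ} (ha : a ∈ E8Lattice) (h0 : a ≠ 0) :
    2 ≤ ∑ i, a i ^ 2 := by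
  obtain ⟨hint | hhalf, m, hm⟩ := ha
  · choose k hk using hint
    have hsum : ∑ i, k i = 2 * m := by
      have : ((∑ i, k i : ℤ) : ℝ) = ((2 * m : ℤ) : ℝ) := by
        push_cast
        rw [← hm]
        exact Finset.sum_congr rfl fun i _ => (hk i).symm
      exact_mod_cast this
    have hex : ∃ i, k i ≠ 0 := by
      by_contra hco
      push_neg at hco
      apply h0
      funext i
      simp [hk i, hco i]
    obtain ⟨i0, hi0⟩ := hex
    have h1 : 1 ≤ ∑ i, k i ^ 2 := by
      calc (1 : ℤ) ≤ k i0 ^ 2 := int_one_le_sq hi0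
      _ ≤ ∑ i, k i ^ 2 := Finset.single_le_sum (fun i _ => sq_nonneg (k i)) (Finset.mem_univ i0)
    have hpar : (∑ i, k i ^ 2) % 2 = 0 := by
      have e1 : (∑ i, k i ^ 2) % 2 = (∑ i, k i) % 2 := by
        rw [Finset.sum_int_mod, Finset.sum_int_mod (f := k)]
        congr 1
        apply Finset.sum_congr rfl
        intro i _
        rcases Int.even_or_odd (k i) with ⟨c, hc⟩ | ⟨c, hc⟩ <;> rw [hc] <;> ring_nf <;> omega
      rw [e1, hsum]
      omega
    have h2 : (2 : ℤ) ≤ ∑ i, k i ^ 2 := by omega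
    have : ((∑ i, k i ^ 2 : ℤ) : ℝ) = ∑ i, a i ^ 2 := by
      push_cast
      exact Finset.sum_congr rfl fun i _ => by rw [hk i]
    rw [← this]
    exact_mod_cast h2
  · choose k hk using hhalf
    have hterm : ∀ i, (1 : ℝ) / 4 ≤ a i ^ 2 := by
      intro i
      have hne : (2 * k i + 1) ≠ 0 := by omega
      have hodd : (1 : ℤ) ≤ (2 * k i + 1) ^ 2 := int_one_le_sq hne
      have hodd' : (1 : ℝ) ≤ ((2 * k i + 1 : ℤ) : ℝ) ^ 2 := by exact_mod_cast hodd
      have : a i = ((2 * k i + 1 : ℤ) : ℝ) / 2 := by rw [hk i]; push_cast; ring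
      rw [this]
      nlinarith
    calc (2 : ℝ) = ∑ _i : Fin 8, (1 : ℝ) / 4 := by simp; norm_num
    _ ≤ ∑ i, a i ^ 2 := Finset.sum_le_sum fun i _ => hterm i

/-- Doubled integer coordinates of the 112 integer roots of `E₈`. -/
noncomputable def intRootsF : Finset (Fin 8 → ℤ) :=
  (Finset.Icc (fun _ => (-1 : ℤ)) fun _ => 1).filter
    (fun w => ∑ i, w i ^ 2 = 2 ∧ (∑ i, w i) % 2 = 0)

/-- Sign patterns of the 128 half-integer roots of `E₈`. -/
def signsF : Finset (Fin 8 → Bool) :=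
  Finset.univ.filter (fun s => (∑ i, (if s i then 1 else -1 : ℤ)) % 4 = 0)

open scoped Classical in
noncomputable def E8RootsF : Finset (Fin 8 → ℝ) :=
  (intRootsF.image (fun w i => (w i : ℝ))) ∪
    (signsF.image (fun s i => if s i then 1 / 2 else -1 / 2))

set_option maxRecDepth 1000000 in
set_option maxHeartbeats 8000000 in
lemma intRootsF_card : intRootsF.card = 112 := by decide

set_option maxRecDepth 1000000 in
set_option maxHeartbeats 8000000 in
lemma signsF_card : signsF.card = 128 := by decide

lemma E8RootsF_card : E8RootsF.card = 240 := by
  classical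
  have hinj1 : Function.Injective (fun (w : Fin 8 → ℤ) => fun i => (w i : ℝ)) := by
    intro w1 w2 h
    funext i
    have hq : ((w1 i : ℤ) : ℝ) = ((w2 i : ℤ) : ℝ) := congrFun h i
    exact_mod_cast hq
  have hinj2 : Function.Injective
      (fun (s : Fin 8 → Bool) => fun i => if s i then (1:ℝ)/2 else -1/2) := by
    intro s1 s2 h
    funext i
    have hq : (if s1 i then (1:ℝ)/2 else -1/2) = (if s2 i then (1:ℝ)/2 else -1/2) :=
      congrFun h i
    rcases h1 : s1 i <;> rcases h2 : s2 i <;> rw [h1, h2] at hq <;>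
      first
      | rfl
      | norm_num at hq
  have hdisj : Disjoint (intRootsF.image (fun w i => (w i : ℝ)))
      (signsF.image (fun s i => if s i then (1:ℝ)/2 else -1/2)) := by
    rw [Finset.disjoint_left]
    rintro x hx1 hx2
    obtain ⟨w, -, hw⟩ := Finset.mem_image.mp hx1
    obtain ⟨s, -, hs⟩ := Finset.mem_image.mp hx2
    have h0 : ((w 0 : ℤ) : ℝ) = if s 0 then 1/2 else -1/2 :=
      (congrFun hw 0).trans (congrFun hs 0).symm
    rcases hb : s 0 <;> rw [hb] at h0 <;> norm_num at h0
    · have h1 : ((2 * w 0 : ℤ) : ℝ) = -1 := by push_cast; linarith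
      have : (2 * w 0 : ℤ) = -1 := by exact_mod_cast h1
      omega
    · have h1 : ((2 * w 0 : ℤ) : ℝ) = 1 := by push_cast; linarith
      have : (2 * w 0 : ℤ) = 1 := by exact_mod_cast h1
      omega
  rw [E8RootsF, Finset.card_union_of_disjoint hdisj,
    Finset.card_image_of_injective _ hinj1, Finset.card_image_of_injective _ hinj2,
    intRootsF_card, signsF_card]

/-- The roots of `E₈`: lattice vectors of squared norm `2`. -/
def E8Roots : Set (Fin 8 → ℝ) := {x | x ∈ E8Lattice ∧ ∑ i, x i ^ 2 = 2}

lemma E8Roots_eq_coe : E8Roots = ↑E8RootsF := by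
  classical
  ext x
  simp only [E8RootsF, Finset.coe_union, Set.mem_union, Finset.coe_image, Set.mem_image,
    Finset.mem_coe, E8Roots, Set.mem_setOf_eq]
  constructor
  · rintro ⟨⟨hint | hhalf, m, hm⟩, hnorm⟩
    · left
      choose k hk using hint
      have hxk : x = fun i => ((k i : ℤ) : ℝ) := funext hk
      have hsum : ∑ i, k i = 2 * m := by
        have : ((∑ i, k i : ℤ) : ℝ) = ((2 * m : ℤ) : ℝ) := by
          push_cast; rw [← hm]; exact Finset.sum_congr rfl fun i _ => (hk i).symm
        exact_mod_cast this
      have hnk : ∑ i, k i ^ 2 = 2 := by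
        have : ((∑ i, k i ^ 2 : ℤ) : ℝ) = (2 : ℝ) := by
          push_cast; rw [← hnorm]; exact Finset.sum_congr rfl fun i _ => by rw [hk i]
        exact_mod_cast this
      refine ⟨k, ?_, hxk.symm⟩
      rw [intRootsF, Finset.mem_filter, Finset.mem_Icc]
      refine ⟨⟨?_, ?_⟩, hnk, by omega⟩
      · intro i
        have h2 : k i ^ 2 ≤ 2 := hnk ▸
          Finset.single_le_sum (fun j _ => sq_nonneg (k j)) (Finset.mem_univ i)
        show (-1 : ℤ) ≤ k i
        nlinarith [sq_nonneg (k i + 1)]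
      · intro i
        have h2 : k i ^ 2 ≤ 2 := hnk ▸
          Finset.single_le_sum (fun j _ => sq_nonneg (k j)) (Finset.mem_univ i)
        show k i ≤ (1 : ℤ)
        nlinarith [sq_nonneg (k i - 1)]
    · right
      choose k hk using hhalf
      have hzero : ∑ i, (k i ^ 2 + k i) = 0 := by
        have hr : ((∑ i, (k i ^ 2 + k i) : ℤ) : ℝ) = 0 := by
          push_cast
          have : ∀ i, ((k i : ℝ) ^ 2 + k i) = x i ^ 2 - 1 / 4 := by
            intro i; rw [hk i]; ring
          rw [Finset.sum_congr rfl fun i _ => this i, Finset.sum_sub_distrib, hnorm]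
          simp
          norm_num
        exact_mod_cast hr
      have hnn : ∀ i, 0 ≤ k i ^ 2 + k i := by
        intro i
        nlinarith [sq_nonneg (2 * k i + 1)]
      have heach : ∀ i, k i = 0 ∨ k i = -1 := by
        intro i
        have h0 : k i ^ 2 + k i = 0 :=
          (Finset.sum_eq_zero_iff_of_nonneg (fun i _ => hnn i)).mp hzero i (Finset.mem_univ i)
        have hfac : k i * (k i + 1) = 0 := by linear_combination h0
        rcases mul_eq_zero.mp hfac with h | h
        · exact Or.inl h
        · right; omega
      refine ⟨fun i => decide (k i = 0), ?_, ?_⟩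
      · rw [signsF, Finset.mem_filter]
        refine ⟨Finset.mem_univ _, ?_⟩
        have hterm : ∀ i, (if decide (k i = 0) = true then (1 : ℤ) else -1) = 2 * k i + 1 := by
          intro i
          rcases heach i with h | h <;> simp [h]
        rw [Finset.sum_congr rfl fun i _ => hterm i]
        have hsk : ∑ i, k i = 2 * m - 4 := by
          have : ((∑ i, k i : ℤ) : ℝ) = ((2 * m - 4 : ℤ) : ℝ) := by
            push_cast
            have : ∀ i, (k i : ℝ) = x i - 1 / 2 := fun i => by rw [hk i]; ring
            rw [Finset.sum_congr rfl fun i _ => this i, Finset.sum_sub_distrib, hm]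
            simp
            norm_num
          exact_mod_cast this
        rw [Finset.sum_add_distrib, ← Finset.mul_sum, hsk]
        simp
        omega
      · funext i
        rcases heach i with h | h <;> simp [hk i, h] <;> norm_num
  · rintro (⟨w, hw, hxw⟩ | ⟨s, hs, hxs⟩)
    · rw [intRootsF, Finset.mem_filter, Finset.mem_Icc] at hw
      obtain ⟨-, hn, hp⟩ := hw
      subst hxw
      refine ⟨⟨Or.inl fun i => ⟨w i, rfl⟩, ⟨(∑ i, w i) / 2, ?_⟩⟩, ?_⟩
      · push_cast
        rw [← Int.cast_sum]
        rw [show (2 : ℝ) * ((((∑ i, w i) / 2 : ℤ) : ℝ)) = (((2 * ((∑ i, w i) / 2) : ℤ)) : ℝ) by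
          push_cast; ring]
        congr 1
        omega
      · push_cast
        exact_mod_cast hn
    · rw [signsF, Finset.mem_filter] at hs
      obtain ⟨-, hp⟩ := hs
      subst hxs
      refine ⟨⟨Or.inr fun i => ⟨if s i then 0 else -1, by rcases hb : s i <;> simp [hb] <;> norm_num⟩,
        ⟨(∑ i, (if s i then 1 else -1 : ℤ)) / 4, ?_⟩⟩, ?_⟩
      · have key : (2 : ℝ) * ∑ i, (if s i then (1:ℝ) / 2 else -1 / 2) =
            ((∑ i, (if s i then 1 else -1 : ℤ) : ℤ) : ℝ) := by
          rw [Finset.mul_sum]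
          push_cast
          refine Finset.sum_congr rfl fun i _ => ?_
          rcases hb : s i <;> simp [hb] <;> norm_num
        set T := ∑ i, (if s i then 1 else -1 : ℤ) with hT
        obtain ⟨m', hm'⟩ : ∃ m', T = 4 * m' := ⟨T / 4, by omega⟩
        have hTr : (T : ℝ) = 4 * (m' : ℝ) := by exact_mod_cast congrArg (Int.cast : ℤ → ℝ) hm'
        rw [show (T / 4 : ℤ) = m' by omega]
        push_cast
        linarith
      · have : ∀ i : Fin 8, (if s i then (1:ℝ)/2 else -1/2) ^ 2 = 1 / 4 := by
          intro i; rcases hb : s i <;> simp [hb] <;> norm_num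
        rw [Finset.sum_congr rfl fun i _ => this i]
        simp
        norm_num

lemma zero_mem_E8Lattice : (0 : Fin 8 → ℝ) ∈ E8Lattice :=
  ⟨Or.inl fun i => ⟨0, by simp⟩, 0, by simp⟩

/-- Each root of `E₈ ⊥ E₈` is supported in exactly one of the two blocks. -/
lemma root_component (x : (Fin 8 ⊕ Fin 8) → ℝ) (hx : x ∈ E8perpE8Roots) :
    ((fun i => x (Sum.inl i)) = 0 ∧ (fun i => x (Sum.inr i)) ∈ E8Roots) ∨
      ((fun i => x (Sum.inr i)) = 0 ∧ (fun i => x (Sum.inl i)) ∈ E8Roots) := by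
  obtain ⟨ha, hb, hn⟩ := hx
  set a : Fin 8 → ℝ := fun i => x (Sum.inl i) with hA
  set b : Fin 8 → ℝ := fun i => x (Sum.inr i) with hB
  have hsplit : ∑ i, a i ^ 2 + ∑ i, b i ^ 2 = 2 := by
    rw [← hn, ← Fintype.sum_sum_type (fun i => x i ^ 2)]
  have hbnn : (0 : ℝ) ≤ ∑ i, b i ^ 2 := Finset.sum_nonneg fun i _ => sq_nonneg _
  have hann : (0 : ℝ) ≤ ∑ i, a i ^ 2 := Finset.sum_nonneg fun i _ => sq_nonneg _
  by_cases h0 : a = 0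
  · left
    refine ⟨h0, hb, ?_⟩
    have : ∑ i, a i ^ 2 = 0 := by rw [h0]; simp
    linarith
  · right
    have h2a : 2 ≤ ∑ i, a i ^ 2 := E8_min_norm ha h0
    have hb0 : ∑ i, b i ^ 2 = 0 := by linarith
    have hbz : b = 0 := by
      funext i
      have := (Finset.sum_eq_zero_iff_of_nonneg (fun j _ => sq_nonneg (b j))).mp hb0 i
        (Finset.mem_univ i)
      exact pow_eq_zero_iff (two_ne_zero) |>.mp this
    exact ⟨hbz, ha, by linarith⟩

open scoped Classical in
noncomputable def E8perpRootsF : Finset ((Fin 8 ⊕ Fin 8) → ℝ) :=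
  E8RootsF.image (fun a => Sum.elim a 0) ∪ E8RootsF.image (fun b => Sum.elim 0 b)

lemma E8perpE8Roots_eq_coe : E8perpE8Roots = ↑E8perpRootsF := by
  classical
  ext x
  simp only [E8perpRootsF, Finset.coe_union, Set.mem_union, Finset.coe_image, Set.mem_image,
    Finset.mem_coe]
  constructor
  · intro hx
    rcases root_component x hx with ⟨hA, hBroot⟩ | ⟨hB, hAroot⟩
    · right
      refine ⟨fun i => x (Sum.inr i), ?_, ?_⟩
      · rw [← Finset.mem_coe, ← E8Roots_eq_coe]; exact hBroot
      · funext i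
        rcases i with i | i
        · exact (congrFun hA i).symm
        · rfl
    · left
      refine ⟨fun i => x (Sum.inl i), ?_, ?_⟩
      · rw [← Finset.mem_coe, ← E8Roots_eq_coe]; exact hAroot
      · funext i
        rcases i with i | i
        · rfl
        · exact (congrFun hB i).symm
  · rintro (⟨a, ha, rfl⟩ | ⟨b, hb, rfl⟩)
    · have haR : a ∈ E8Roots := by rw [E8Roots_eq_coe]; exact ha
      obtain ⟨haL, han⟩ := haR
      refine ⟨haL, zero_mem_E8Lattice, ?_⟩
      rw [Fintype.sum_sum_type (fun i => (Sum.elim a (0 : Fin 8 → ℝ)) i ^ 2)]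
      simpa using han
    · have hbR : b ∈ E8Roots := by rw [E8Roots_eq_coe]; exact hb
      obtain ⟨hbL, hbn⟩ := hbR
      refine ⟨zero_mem_E8Lattice, hbL, ?_⟩
      rw [Fintype.sum_sum_type (fun i => (Sum.elim (0 : Fin 8 → ℝ) b) i ^ 2)]
      simpa using hbn

lemma E8perpRootsF_card : E8perpRootsF.card = 480 := by
  classical
  have hinj1 : Function.Injective (fun (a : Fin 8 → ℝ) => Sum.elim a (0 : Fin 8 → ℝ)) := by
    intro a1 a2 h
    funext i
    exact congrFun h (Sum.inl i)
  have hinj2 : Function.Injective (fun (b : Fin 8 → ℝ) => Sum.elim (0 : Fin 8 → ℝ) b) := by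
    intro b1 b2 h
    funext i
    exact congrFun h (Sum.inr i)
  have hdisj : Disjoint (E8RootsF.image (fun a => Sum.elim a (0 : Fin 8 → ℝ)))
      (E8RootsF.image (fun b => Sum.elim (0 : Fin 8 → ℝ) b)) := by
    rw [Finset.disjoint_left]
    rintro x hx1 hx2
    obtain ⟨a, haF, ha⟩ := Finset.mem_image.mp hx1
    obtain ⟨b, hbF, hb⟩ := Finset.mem_image.mp hx2
    have ha0 : a = 0 := by
      funext i
      have h1 : a i = x (Sum.inl i) := congrFun ha (Sum.inl i)
      have h2 : (0 : ℝ) = x (Sum.inl i) := congrFun hb (Sum.inl i)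
      rw [h1, ← h2]
      rfl
    have haR : a ∈ E8Roots := by rw [E8Roots_eq_coe]; exact haF
    obtain ⟨-, han⟩ := haR
    rw [ha0] at han
    simp at han
  rw [E8perpRootsF, Finset.card_union_of_disjoint hdisj,
    Finset.card_image_of_injective _ hinj1, Finset.card_image_of_injective _ hinj2,
    E8RootsF_card]

noncomputable def blockEquiv : offDiagonalBlockSymmetric ≃ₗ[ℝ] Matrix (Fin 8) (Fin 8) ℝ where
  toFun H := Matrix.of fun i j => H.1 (Sum.inl i) (Sum.inr j)
  map_add' H K := by ext i j; rfl
  map_smul' c H := by ext i j; rfl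
  invFun C := ⟨Matrix.fromBlocks 0 C Cᵀ 0, by
    constructor
    · simp [Matrix.fromBlocks_transpose]
    · exact ⟨fun i j => rfl, fun i j => rfl⟩⟩
  left_inv := by
    rintro ⟨H, hsym, h1, h2⟩
    apply Subtype.ext
    ext i j
    rcases i with i | i <;> rcases j with j | j
    · exact (h1 i j).symm
    · rfl
    · show H (Sum.inl j) (Sum.inr i) = H (Sum.inr i) (Sum.inl j)
      conv_rhs => rw [← hsym]
      rfl
    · exact (h2 i j).symm
  right_inv C := by ext i j; rfl

lemma finrank_offDiag : Module.finrank ℝ offDiagonalBlockSymmetric = 64 := by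
  rw [blockEquiv.finrank_eq]
  simp [Module.finrank_matrix]

lemma quad_zero (H : Matrix (Fin 8 ⊕ Fin 8) (Fin 8 ⊕ Fin 8) ℝ)
    (hH : H ∈ offDiagonalBlockSymmetric) (x : (Fin 8 ⊕ Fin 8) → ℝ)
    (hx : x ∈ E8perpE8Roots) : x ⬝ᵥ (H *ᵥ x) = 0 := by
  obtain ⟨-, h1, h2⟩ := hH
  have hexp : x ⬝ᵥ (H *ᵥ x) = ∑ i, ∑ j, x i * (H i j * x j) := by
    simp [dotProduct, Matrix.mulVec, Finset.mul_sum, mul_add]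
  rw [hexp]
  apply Finset.sum_eq_zero
  intro i _
  apply Finset.sum_eq_zero
  intro j _
  rcases root_component x hx with ⟨hA, -⟩ | ⟨hB, -⟩
  · have hA' : ∀ i, x (Sum.inl i) = (0 : ℝ) := fun i => (congrFun hA i).trans (Pi.zero_apply i)
    rcases i with i | i <;> rcases j with j | j
    · rw [h1 i j]; ring
    · rw [hA' i]; ring
    · rw [hA' j]; ring
    · rw [h2 i j]; ring
  · have hB' : ∀ i, x (Sum.inr i) = (0 : ℝ) := fun i => (congrFun hB i).trans (Pi.zero_apply i)
    rcases i with i | i <;> rcases j with j | j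
    · rw [h1 i j]; ring
    · rw [hB' j]; ring
    · rw [hB' i]; ring
    · rw [h2 i j]; ring

end Aux

theorem E8perpE8_zero_eigenvalue :
    Set.ncard E8perpE8Roots = 480 ∧
      Module.finrank ℝ offDiagonalBlockSymmetric = 64 ∧
      ∀ H ∈ offDiagonalBlockSymmetric, ∑ᶠ x ∈ E8perpE8Roots, (x ⬝ᵥ (H *ᵥ x)) ^ 2 = 0 :=
  ⟨by rw [E8perpE8Roots_eq_coe, Set.ncard_coe_finset, E8perpRootsF_card],
   finrank_offDiag,
   by
    intro H hH
    have hz : ∀ x ∈ E8perpE8Roots, (x ⬝ᵥ (H *ᵥ x)) ^ 2 = (0 : ℝ) := by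
      intro x hx
      rw [quad_zero H hH x hx]
      norm_num
    rw [finsum_mem_congr rfl hz]
    simp⟩
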